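/- For integers n, r, s with 0 ≤ n−r−s ≤ r < n, the multiplicity formula e = C(n+s−2, n−r−1) − C(n+s−2, n−1) is a nonnegative integer, and one has the consistency identity: the h-vector entries h_k = C(r+s−1, k)·C(n−r−1, k) − C(s+1, k+1)·C(n−3, k−1) for 0 ≤ k ≤ r+s−1 (with C(a,b) = 0 when a < b) satisfy Σ_k h_k = C(n+s−2, n−r−1) − C(n+s−2, n−1). -/
import Mathlib

open Finset

lemma choose_mono_half (N : ℕ) : ∀ b a, a ≤ b → 2 * b ≤ N + 1 → N.choose a ≤ N.choose b := by
  intro b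
  induction b with
  | zero => intro a ha _; interval_cases a; rfl
  | succ b ih =>
    intro a ha hb
    rcases Nat.lt_or_ge a (b+1) with h | h
    · have h1 : N.choose a ≤ N.choose b := ih a (by omega) (by omega)
      have h2 : N.choose b ≤ N.choose (b+1) := by
        have key := Nat.choose_succ_right_eq N b
        have hb1 : b + 1 ≤ N - b := by omega
        nlinarith [Nat.choose_pos (show b ≤ N by omega)]
      omega
    · have : a = b+1 := by omega
      simp [this]

lemma vand1 (a b : ℕ) :
    ∑ k ∈ range (a+1), a.choose k * b.choose k = (a+b).choose b := by
  rw [Nat.add_choose_eq, Finset.Nat.sum_antidiagonal_eq_sum_range_succ_mk]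
  have e1 : ∑ k ∈ range (b+1), a.choose k * b.choose (b - k)
      = ∑ k ∈ range (b+1), a.choose k * b.choose k := by
    apply Finset.sum_congr rfl
    intro k hk
    rw [Nat.choose_symm (by simpa using Nat.lt_succ_iff.mp (Finset.mem_range.mp hk))]
  rw [e1]
  have ea : ∑ k ∈ range (a+1), a.choose k * b.choose k
      = ∑ k ∈ range (a+b+1), a.choose k * b.choose k := by
    apply Finset.sum_subset (Finset.range_subset_range.mpr (by omega))
    intro k _ hk
    have : a < k := by have := Finset.mem_range.not.mp hk; omega
    rw [Nat.choose_eq_zero_of_lt this, Nat.zero_mul]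
  have eb : ∑ k ∈ range (b+1), a.choose k * b.choose k
      = ∑ k ∈ range (a+b+1), a.choose k * b.choose k := by
    apply Finset.sum_subset (Finset.range_subset_range.mpr (by omega))
    intro k _ hk
    have : b < k := by have := Finset.mem_range.not.mp hk; omega
    rw [Nat.choose_eq_zero_of_lt this, Nat.mul_zero]
  rw [ea, eb]

lemma vand2 (n r s : ℕ) (hn : 3 ≤ n) (hr : 1 ≤ r) :
    ∑ k ∈ range (r+s), (s+1).choose (k+1) * (if k = 0 then 0 else (n-3).choose (k-1))
      = (n+s-2).choose (n-1) := by
  have hrs : r + s = (r + s - 1) + 1 := by omega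
  rw [hrs, Finset.sum_range_succ']
  rw [show ((s+1).choose (0+1) * (if (0:ℕ) = 0 then 0 else (n-3).choose (0-1))) = 0 from by simp,
    Nat.add_zero]
  have esum : ∑ j ∈ range (r+s-1),
      (s+1).choose (j+1+1) * (if j+1 = 0 then 0 else (n-3).choose (j+1-1))
      = ∑ j ∈ range (r+s-1), (s+1).choose (j+1+1) * (n-3).choose j :=
    Finset.sum_congr rfl (fun j _ => by simp)
  rw [esum]
  -- now : ∑ j ∈ range (r+s-1), (s+1).choose (j+2) * (n-3).choose j = (n+s-2).choose (n-1)
  rcases Nat.eq_zero_or_pos s with hs | hs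
  · subst hs
    have h0 : (n + 0 - 2).choose (n-1) = 0 := Nat.choose_eq_zero_of_lt (by omega)
    rw [h0]
    apply Finset.sum_eq_zero
    intro j _
    have : (0+1).choose (j+1+1) = 0 := Nat.choose_eq_zero_of_lt (by omega)
    rw [this, Nat.zero_mul]
  · have hM : n + s - 2 = (s+1) + (n-3) := by omega
    have hsym : (n+s-2).choose (n-1) = (n+s-2).choose (s-1) := by
      have h1 : n - 1 ≤ n + s - 2 := by omega
      have := Nat.choose_symm h1
      rw [show n + s - 2 - (n-1) = s - 1 by omega] at this
      omega
    rw [hsym, hM, Nat.add_choose_eq, Finset.Nat.sum_antidiagonal_eq_sum_range_succ_mk,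
      show (s - 1).succ = s from by omega]
    have key : ∑ k ∈ range s, (s+1).choose k * (n-3).choose (s-1-k)
        = ∑ j ∈ range s, (s+1).choose (j+1+1) * (n-3).choose j := by
      conv_lhs => rw [← Finset.sum_range_reflect]
      apply Finset.sum_congr rfl
      intro j hj
      have hjs : j < s := Finset.mem_range.mp hj
      rw [show s - 1 - (s - 1 - j) = j by omega]
      congr 1
      have h := Nat.choose_symm (show j + 2 ≤ s + 1 by omega)
      rw [show s + 1 - (j+2) = s - 1 - j by omega] at h
      exact h
    show ∑ j ∈ range (r+s-1), (s+1).choose (j+1+1) * (n-3).choose j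
        = ∑ k ∈ range s, (s+1).choose k * (n-3).choose (s-1-k)
    rw [key]
    symm
    apply Finset.sum_subset (Finset.range_subset_range.mpr (by omega))
    intro j _ hj
    have : s + 1 < j + 1 + 1 := by have := Finset.mem_range.not.mp hj; omega
    rw [Nat.choose_eq_zero_of_lt this, Nat.zero_mul]

theorem hvector_sums_to_multiplicity (n r s : ℕ)
    (h1 : r + s ≤ n) (h2 : n ≤ 2 * r + s) (h3 : r < n) (hr : 1 ≤ r) :
    0 ≤ (Nat.choose (n + s - 2) (n - r - 1) : ℤ) - Nat.choose (n + s - 2) (n - 1) ∧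
    ∑ k ∈ Finset.range (r + s),
        ((Nat.choose (r + s - 1) k : ℤ) * Nat.choose (n - r - 1) k -
          Nat.choose (s + 1) (k + 1) *
            (if k = 0 then 0 else (Nat.choose (n - 3) (k - 1) : ℤ))) =
      (Nat.choose (n + s - 2) (n - r - 1) : ℤ) - Nat.choose (n + s - 2) (n - 1) := by
  constructor
  · -- nonnegativity
    rw [sub_nonneg, Nat.cast_le]
    rcases Nat.eq_zero_or_pos s with hs | hs
    · subst hs
      rw [Nat.choose_eq_zero_of_lt (show n + 0 - 2 < n - 1 by omega)]
      exact Nat.zero_le _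
    · have hsym : (n+s-2).choose (n-1) = (n+s-2).choose (s-1) := by
        have h4 : n - 1 ≤ n + s - 2 := by omega
        have := Nat.choose_symm h4
        rw [show n + s - 2 - (n-1) = s - 1 by omega] at this
        omega
      rw [hsym]
      exact choose_mono_half (n+s-2) (n-r-1) (s-1) (by omega) (by omega)
  · -- the sum identity
    rw [Finset.sum_sub_distrib]
    have e1 : ∑ k ∈ range (r+s), ((Nat.choose (r + s - 1) k : ℤ) * Nat.choose (n - r - 1) k)
        = ((n+s-2).choose (n-r-1) : ℤ) := by
      have := vand1 (r+s-1) (n-r-1)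
      rw [show (r+s-1) + (n-r-1) = n+s-2 by omega] at this
      rw [show r + s = (r+s-1)+1 by omega]
      push_cast [← this]
      rfl
    have e2 : ∑ k ∈ range (r+s),
        ((Nat.choose (s + 1) (k + 1) : ℤ) * (if k = 0 then 0 else (Nat.choose (n - 3) (k - 1) : ℤ)))
        = ((n+s-2).choose (n-1) : ℤ) := by
      rcases Nat.lt_or_ge n 3 with hn | hn
      · -- n = 2, r = 1, s ≤ 1
        have hn2 : n = 2 := by omega
        have hr1 : r = 1 := by omega
        subst hn2; subst hr1
        have hs2 : s ≤ 1 := by omega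
        interval_cases s <;> simp [Finset.sum_range_succ]
      · rw [← vand2 n r s hn hr]
        push_cast
        apply Finset.sum_congr rfl
        intro k _
        split <;> simp
    rw [e1, e2]
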